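/- In the wreath-product setup, the subgroup H = E:⟨θ⟩ is core-free in G = T^n⟨θ⟩ (so G acts faithfully and transitively by right multiplication on the set [G:H] of right cosets of H in G); T^n is the unique minimal normal subgroup of G; T^n acts transitively on [G:H], so G is quasiprimitive on [G:H]; and π_i(T^n ∩ H) = R ∩ T for every 1 ≤ i ≤ n, i.e. T^n ∩ H is a subdirect product of (R ∩ T)^n. -/

import Mathlib

/-- The cyclic-shift automorphism of `ZMod n → X` by `z`. -/
def shiftEquiv (n : ℕ) (X : Type*) [Group X] (z : ZMod n) : (ZMod n → X) ≃* (ZMod n → X) where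
  toFun f i := f (i - z)
  invFun f i := f (i + z)
  left_inv f := funext fun i => by
    show f (i + z - z) = f i
    rw [add_sub_cancel_right]
  right_inv f := funext fun i => by
    show f (i - z + z) = f i
    rw [sub_add_cancel]
  map_mul' f g := rfl

/-- The action of the cyclic group `ZMod n` on `ZMod n → X` by cyclic coordinate shifts. -/
def shiftHom (n : ℕ) (X : Type*) [Group X] :
    Multiplicative (ZMod n) →* MulAut (ZMod n → X) where
  toFun z := shiftEquiv n X z.toAdd
  map_one' := by
    ext f i
    show f (i - 0) = f i
    rw [sub_zero]
  map_mul' z w := by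
    ext f i
    show f (i - (z.toAdd + w.toAdd)) = f (i - z.toAdd - w.toAdd)
    rw [sub_sub]

/-- The wreath product `X ≀ Z_n = X^n : ⟨τ⟩` with `τ` the cyclic coordinate shift. -/
abbrev Wr (n : ℕ) (X : Type*) [Group X] :=
  SemidirectProduct (ZMod n → X) (Multiplicative (ZMod n)) (shiftHom n X)

/-- The shift element `τ` of the wreath product. -/
def tauEl (n : ℕ) (X : Type*) [Group X] : Wr n X :=
  SemidirectProduct.inr (Multiplicative.ofAdd 1)

/-- The element `θ = d₀τ`, where `d₀ = (bc, b, bc, …, bc)`. -/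
def thetaEl (n : ℕ) {X : Type*} [Group X] (b c : X) : Wr n X :=
  SemidirectProduct.inl (fun i => if i = (1 : ZMod n) then b else b * c) * tauEl n X

/-- The base subgroup `T^n` of the wreath product. -/
def TnSub (n : ℕ) {X : Type*} [Group X] (T : Subgroup X) : Subgroup (Wr n X) :=
  Subgroup.map SemidirectProduct.inl (Subgroup.pi Set.univ fun _ => T)

/-- The subgroup `G = T^n⟨θ⟩`. -/
def Gsub (n : ℕ) {X : Type*} [Group X] (T : Subgroup X) (b c : X) : Subgroup (Wr n X) :=
  TnSub n T ⊔ Subgroup.zpowers (thetaEl n b c)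

/-- The subgroup `H = E:⟨θ⟩`. -/
def Hsub (n : ℕ) {X : Type*} [Group X] (E : Subgroup (ZMod n → X)) (b c : X) :
    Subgroup (Wr n X) :=
  Subgroup.map SemidirectProduct.inl E ⊔ Subgroup.zpowers (thetaEl n b c)

def NormalIn {W : Type*} [Group W] (N H : Subgroup W) : Prop :=
  N ≤ H ∧ ∀ h ∈ H, ∀ x ∈ N, h * x * h⁻¹ ∈ N

/-- The coset graph `Cos(G, H, g)` on the cosets of `H` in `G`, where cosets `xH`, `yH` are
adjacent iff `x⁻¹y ∈ HgH`. -/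
def cosetGraph {W : Type*} [Group W] (G H : Subgroup W) (g : W) :
    SimpleGraph (↥G ⧸ Subgroup.subgroupOf H G) :=
  SimpleGraph.fromRel fun u v => ∃ x y : ↥G,
    (QuotientGroup.mk x : ↥G ⧸ Subgroup.subgroupOf H G) = u ∧
    (QuotientGroup.mk y : ↥G ⧸ Subgroup.subgroupOf H G) = v ∧
    ∃ h₁ ∈ H, ∃ h₂ ∈ H, ((x⁻¹ * y : ↥G) : W) = h₁ * g * h₂

/-- 2-arc-transitivity of a group action on a graph. -/
def TwoArcTransAct {V : Type*} (Γ : SimpleGraph V) (G : Type*) [Group G] [MulAction G V] :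
    Prop :=
  ∀ a b c a' b' c' : V, Γ.Adj a b → Γ.Adj b c → a ≠ c →
    Γ.Adj a' b' → Γ.Adj b' c' → a' ≠ c' →
    ∃ g : G, g • a = a' ∧ g • b = b' ∧ g • c = c'

open Subgroup SemidirectProduct Multiplicative

section Infra
variable {n : ℕ} {X : Type*} [Group X]

/-- the function `d₀`. -/
def d0 (n : ℕ) (b c : X) : ZMod n → X := fun i => if i = 1 then b else b * c

lemma thetaEl_eq (b c : X) :
    thetaEl n b c = inl (d0 n b c) * inr (ofAdd 1) := rfl

lemma shift_apply (z : Multiplicative (ZMod n)) (g : ZMod n → X) :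
    (shiftHom n X z) g = fun i => g (i - z.toAdd) := rfl

lemma conj_inl' (a : ZMod n → X) (z : Multiplicative (ZMod n)) (g : ZMod n → X) :
    (inl a * inr z : Wr n X) * inl g * (inl a * inr z)⁻¹ =
      inl (a * (fun i => g (i - z.toAdd)) * a⁻¹) := by
  have h : (inr z : Wr n X) * inl g * (inr z)⁻¹ = inl ((shiftHom n X z) g) := by
    rw [← map_inv]; exact (inl_aut z g).symm
  rw [mul_inv_rev, ← shift_apply z g]
  calc inl a * inr z * inl g * ((inr z)⁻¹ * (inl a)⁻¹)
      = inl a * ((inr z : Wr n X) * inl g * (inr z)⁻¹) * (inl a)⁻¹ := by group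
    _ = inl a * inl ((shiftHom n X z) g) * (inl a)⁻¹ := by rw [h]
    _ = inl (a * (shiftHom n X z) g * a⁻¹) := by simp only [← map_inv, ← map_mul]

lemma inl_mem_TnSub_iff {T : Subgroup X} {g : ZMod n → X} :
    inl g ∈ TnSub n T ↔ ∀ i, g i ∈ T := by
  constructor
  · rintro ⟨x, hx, hEq⟩
    have := inl_injective hEq
    subst this
    exact fun i => (Subgroup.mem_pi Set.univ).mp hx i trivial
  · intro h
    exact ⟨g, (Subgroup.mem_pi Set.univ).mpr fun i _ => h i, rfl⟩

lemma mem_TnSub_exists {T : Subgroup X} {w : Wr n X} (hw : w ∈ TnSub n T) :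
    ∃ g, (∀ i, g i ∈ T) ∧ w = inl g := by
  rcases hw with ⟨g, hg, rfl⟩
  exact ⟨g, fun i => (Subgroup.mem_pi Set.univ).mp hg i trivial, rfl⟩

lemma TnSub_normal (T : Subgroup X) (hT : T.Normal) : (TnSub n T).Normal := by
  constructor
  intro x hx w
  rcases mem_TnSub_exists hx with ⟨g, hg, rfl⟩
  have hw : w = inl w.left * inr w.right := (inl_left_mul_inr_right w).symm
  rw [hw, conj_inl']
  refine inl_mem_TnSub_iff.mpr fun i => ?_
  simpa using hT.conj_mem _ (hg _) (w.left i)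

end Infra
section Pow
variable {n : ℕ} {X : Type*} [Group X]

/-- left parts of powers of θ -/
def Pfun (n : ℕ) (b c : X) : ℕ → ZMod n → X
  | 0 => 1
  | (m+1) => Pfun n b c m * fun i => d0 n b c (i - (m : ZMod n))

lemma theta_pow (b c : X) (m : ℕ) :
    (thetaEl n b c) ^ m = inl (Pfun n b c m) * inr (ofAdd (m : ZMod n)) := by
  induction m with
  | zero => simp [Pfun]
  | succ m ih =>
      rw [pow_succ, ih, thetaEl_eq]
      have h : (inr (ofAdd (m : ZMod n)) : Wr n X) * inl (d0 n b c)
          = inl ((shiftHom n X (ofAdd (m : ZMod n))) (d0 n b c)) * inr (ofAdd (m : ZMod n)) := by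
        rw [inl_aut, map_inv]; group
      have hz : ofAdd ((m : ZMod n)) * ofAdd (1 : ZMod n) = ofAdd (((m+1 : ℕ) : ZMod n)) := by
        rw [← ofAdd_add]
        congr 1
        push_cast
        ring
      calc inl (Pfun n b c m) * inr (ofAdd (m : ZMod n)) * (inl (d0 n b c) * inr (ofAdd 1))
          = inl (Pfun n b c m) *
              ((inr (ofAdd (m : ZMod n)) : Wr n X) * inl (d0 n b c)) * inr (ofAdd 1) := by
            group
        _ = inl (Pfun n b c m) *
              (inl ((shiftHom n X (ofAdd (m : ZMod n))) (d0 n b c)) * inr (ofAdd (m : ZMod n))) *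
              inr (ofAdd 1) := by rw [h]
        _ = (inl (Pfun n b c m) * inl ((shiftHom n X (ofAdd (m : ZMod n))) (d0 n b c))) *
              ((inr (ofAdd (m : ZMod n)) : Wr n X) * inr (ofAdd 1)) := by group
        _ = inl (Pfun n b c (m+1)) * inr (ofAdd ((m+1 : ℕ) : ZMod n)) := by
            rw [← map_mul, ← map_mul, hz]
            rfl

end Pow
section PowVal
variable {n : ℕ} {X : Type*} [Group X]

lemma Pfun_apply [NeZero n] {b c : X} (hbc : b * c = c * b) :
    ∀ m, m ≤ n → ∀ i : ZMod n,
      Pfun n b c m i = b ^ m * c ^ (m - (if (i - 1).val < m then 1 else 0)) := by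
  have hcomm : Commute b c := hbc
  intro m
  induction m with
  | zero => intro _ i; simp [Pfun]
  | succ m ih =>
      intro hm i
      have hmn : m < n := by omega
      have hval : ((m : ZMod n)).val = m := ZMod.val_cast_of_lt hmn
      have hd : d0 n b c (i - (m : ZMod n)) = if (i - 1).val = m then b else b * c := by
        have hiff : i - (m : ZMod n) = 1 ↔ (i - 1).val = m := by
          constructor
          · intro h
            have : i - 1 = (m : ZMod n) := by
              have : i = 1 + (m : ZMod n) := by rw [← h]; ring
              rw [this]; ring
            rw [this, hval]
          · intro h
            have : i - 1 = (m : ZMod n) := by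
              conv_lhs => rw [← ZMod.natCast_rightInverse (i - 1)]
              rw [h]
            have : i = 1 + (m : ZMod n) := by
              rw [← this]; ring
            rw [this]; ring
          
        rw [d0]
        by_cases h : (i - 1).val = m
        · rw [if_pos (hiff.mpr h), if_pos h]
        · rw [if_neg (fun hh => h (hiff.mp hh)), if_neg h]
      have hstep : Pfun n b c (m+1) i = Pfun n b c m i * d0 n b c (i - (m : ZMod n)) := rfl
      rw [hstep, ih (by omega) i, hd]
      rcases lt_trichotomy ((i - 1).val) m with hlt | heq | hgt
      · have e1 : (if (i - 1).val < m then 1 else 0) = 1 := if_pos hlt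
        have e2 : (if (i - 1).val = m then b else b * c) = b * c := if_neg (by omega)
        have e3 : (if (i - 1).val < m + 1 then 1 else 0) = 1 := if_pos (by omega)
        rw [e1, e2, e3, Nat.add_sub_cancel]
        obtain ⟨j, hj⟩ : ∃ j, m = j + 1 := ⟨m - 1, by omega⟩
        subst hj
        rw [Nat.add_sub_cancel]
        have hcb : c ^ j * b = b * c ^ j := ((hcomm.symm).pow_left j).eq
        calc b ^ (j+1) * c ^ j * (b * c) = b ^ (j+1) * (c ^ j * b) * c := by group
          _ = b ^ (j+1) * (b * c ^ j) * c := by rw [hcb]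
          _ = b ^ (j+1+1) * c ^ (j+1) := by rw [pow_succ, pow_succ]; group
      · have e1 : (if (i - 1).val < m then 1 else 0) = 0 := if_neg (by omega)
        have e2 : (if (i - 1).val = m then b else b * c) = b := if_pos heq
        have e3 : (if (i - 1).val < m + 1 then 1 else 0) = 1 := if_pos (by omega)
        rw [e1, e2, e3, Nat.add_sub_cancel, Nat.sub_zero]
        have hcb : c ^ m * b = b * c ^ m := ((hcomm.symm).pow_left m).eq
        calc b ^ m * c ^ m * b = b ^ m * (c ^ m * b) := by group
          _ = b ^ m * (b * c ^ m) := by rw [hcb]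
          _ = b ^ (m+1) * c ^ m := by rw [pow_succ]; group
      · have e1 : (if (i - 1).val < m then 1 else 0) = 0 := if_neg (by omega)
        have e2 : (if (i - 1).val = m then b else b * c) = b * c := if_neg (by omega)
        have e3 : (if (i - 1).val < m + 1 then 1 else 0) = 0 := if_neg (by omega)
        rw [e1, e2, e3, Nat.sub_zero, Nat.sub_zero]
        have hcb : c ^ m * b = b * c ^ m := ((hcomm.symm).pow_left m).eq
        calc b ^ m * c ^ m * (b * c) = b ^ m * (c ^ m * b) * c := by group
          _ = b ^ m * (b * c ^ m) * c := by rw [hcb]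
          _ = b ^ (m+1) * c ^ (m+1) := by rw [pow_succ, pow_succ]; group

lemma theta_pow_n [NeZero n] {b c : X} (hbc : b * c = c * b) :
    (thetaEl n b c) ^ (n : ℕ) = inl (fun _ => b ^ n * c ^ (n - 1)) := by
  rw [theta_pow]
  have h1 : (ofAdd ((n : ZMod n))) = (1 : Multiplicative (ZMod n)) := by
    rw [ZMod.natCast_self]; rfl
  rw [h1, map_one, mul_one]
  congr 1
  funext i
  rw [Pfun_apply hbc n le_rfl i, if_pos (ZMod.val_lt _)]

end PowVal
section Conj
variable {n : ℕ} {X : Type*} [Group X]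

lemma conj_mulSingle (b c : X) (i : ZMod n) (x : X) :
    thetaEl n b c * inl (Pi.mulSingle i x) * (thetaEl n b c)⁻¹ =
      inl (Pi.mulSingle (i+1) (d0 n b c (i+1) * x * (d0 n b c (i+1))⁻¹)) := by
  rw [thetaEl_eq, conj_inl']
  congr 1
  have h1 : (fun j => (Pi.mulSingle i x : ZMod n → X) (j - (ofAdd (1 : ZMod n)).toAdd))
      = Pi.mulSingle (i+1) x := by
    funext j
    by_cases h : j = i + 1
    · subst h
      have : i + 1 - (ofAdd (1 : ZMod n)).toAdd = i := by
        show i + 1 - 1 = i; ring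
      rw [this, Pi.mulSingle_eq_same, Pi.mulSingle_eq_same]
    · have h2 : j - (ofAdd (1 : ZMod n)).toAdd ≠ i := by
        show j - 1 ≠ i
        intro hc
        exact h (by rw [← hc]; ring)
      rw [Pi.mulSingle_eq_of_ne h2, Pi.mulSingle_eq_of_ne h]
  rw [h1]
  funext j
  by_cases h : j = i + 1
  · subst h
    simp [Pi.mulSingle_eq_same]
  · simp [Pi.mulSingle_eq_of_ne h, Pi.mul_apply]

instance WrFinite [Finite X] [NeZero n] : Finite (Wr n X) := by
  have : Function.Injective (fun w : Wr n X => (w.left, w.right)) := by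
    intro a b h
    rw [Prod.mk.injEq] at h
    exact SemidirectProduct.ext h.1 h.2
  exact Finite.of_injective _ this

lemma theta_mem_normalizer [Finite X] [NeZero n] (E : Subgroup (ZMod n → X)) (b c : X)
    (hEnorm : ∀ x ∈ Subgroup.map (inl : (ZMod n → X) →* Wr n X) E,
      thetaEl n b c * x * (thetaEl n b c)⁻¹ ∈ Subgroup.map (inl : (ZMod n → X) →* Wr n X) E) :
    thetaEl n b c ∈ Subgroup.normalizer ((Subgroup.map (inl : (ZMod n → X) →* Wr n X) E : Set (Wr n X))) := by
  set θ := thetaEl n b c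
  set E' := Subgroup.map (inl : (ZMod n → X) →* Wr n X) E with hE'
  have h1 : Subgroup.map (MulAut.conj θ).toMonoidHom E' ≤ E' := by
    rintro _ ⟨x, hx, rfl⟩
    exact hEnorm x hx
  have hcard : Nat.card E' ≤ Nat.card (Subgroup.map (MulAut.conj θ).toMonoidHom E') := by
    rw [Nat.card_congr (Subgroup.equivMapOfInjective E' (MulAut.conj θ).toMonoidHom (fun a b h => (MulAut.conj θ).injective h)).toEquiv]
  have h2 : Subgroup.map (MulAut.conj θ).toMonoidHom E' = E' :=
    Subgroup.eq_of_le_of_card_ge h1 hcard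
  rw [Subgroup.mem_normalizer_iff]
  intro x
  constructor
  · intro hx
    have : (MulAut.conj θ).toMonoidHom x ∈ Subgroup.map (MulAut.conj θ).toMonoidHom E' :=
      Subgroup.mem_map_of_mem _ hx
    rw [h2] at this
    simpa [MulAut.conj_apply] using this
  · intro hx
    have hx' : θ * x * θ⁻¹ ∈ Subgroup.map (MulAut.conj θ).toMonoidHom E' := by rw [h2]; exact hx
    rcases hx' with ⟨y, hy, hEq⟩
    have : y = x := by
      apply (MulAut.conj θ).injective
      simpa [MulAut.conj_apply] using hEq
    rwa [← this]

end Conj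
section Chars
variable {n : ℕ} {X : Type*} [Group X]

lemma mem_Hsub_iff [Finite X] [NeZero n] {E : Subgroup (ZMod n → X)} {b c : X}
    (hEnorm : ∀ x ∈ Subgroup.map (inl : (ZMod n → X) →* Wr n X) E,
      thetaEl n b c * x * (thetaEl n b c)⁻¹ ∈ Subgroup.map (inl : (ZMod n → X) →* Wr n X) E)
    {w : Wr n X} :
    w ∈ Hsub n E b c ↔ ∃ e ∈ E, ∃ m : ℤ, w = inl e * (thetaEl n b c) ^ m := by
  set θ := thetaEl n b c with hθ
  have hnorm := theta_mem_normalizer E b c hEnorm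
  have hnormz : ∀ m : ℤ, θ ^ m ∈ Subgroup.normalizer ((Subgroup.map (inl : (ZMod n → X) →* Wr n X) E : Set (Wr n X))) :=
    fun m => Subgroup.zpow_mem _ hnorm m
  have hconj : ∀ (m : ℤ) (f : ZMod n → X), f ∈ E →
      ∃ f' ∈ E, inl f' = θ ^ m * inl f * (θ ^ m)⁻¹ := by
    intro m f hf
    have := (Subgroup.mem_normalizer_iff.mp (hnormz m) (inl f)).mp
      (Subgroup.mem_map_of_mem _ hf)
    rcases this with ⟨f', hf', hEq⟩
    exact ⟨f', hf', hEq⟩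
  let H' : Subgroup (Wr n X) :=
    { carrier := {w | ∃ e ∈ E, ∃ m : ℤ, w = inl e * θ ^ m}
      one_mem' := ⟨1, E.one_mem, 0, by simp⟩
      mul_mem' := by
        rintro x y ⟨e, he, a, rfl⟩ ⟨f, hf, b', rfl⟩
        rcases hconj a f hf with ⟨f', hf', hEq⟩
        refine ⟨e * f', E.mul_mem he hf', a + b', ?_⟩
        rw [map_mul, hEq, zpow_add]
        group
      inv_mem' := by
        rintro x ⟨e, he, a, rfl⟩
        rcases hconj (-a) e⁻¹ (E.inv_mem he) with ⟨f', hf', hEq⟩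
        refine ⟨f', hf', -a, ?_⟩
        rw [hEq, map_inv]
        group }
  have hH : Hsub n E b c = H' := by
    apply le_antisymm
    · apply sup_le
      · rintro _ ⟨e, he, rfl⟩
        exact ⟨e, he, 0, by simp⟩
      · rintro x hx
        rcases Subgroup.mem_zpowers_iff.mp hx with ⟨m, rfl⟩
        exact ⟨1, E.one_mem, m, by simp [hθ]⟩
    · rintro x ⟨e, he, m, rfl⟩
      exact mul_mem (Subgroup.mem_sup_left (Subgroup.mem_map_of_mem _ he))
        (Subgroup.mem_sup_right (Subgroup.mem_zpowers_iff.mpr ⟨m, rfl⟩))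
  rw [hH]; rfl

lemma mem_Gsub_iff {T : Subgroup X} (hTn : T.Normal) {b c : X} {w : Wr n X} :
    w ∈ Gsub n T b c ↔ ∃ g, (∀ i, g i ∈ T) ∧ ∃ m : ℤ, w = (thetaEl n b c) ^ m * inl g := by
  set θ := thetaEl n b c with hθ
  have hN : (TnSub n T).Normal := TnSub_normal T hTn
  have hconj : ∀ (m : ℤ) (g : ZMod n → X), (∀ i, g i ∈ T) →
      ∃ g', (∀ i, g' i ∈ T) ∧ inl g' = θ ^ m * inl g * (θ ^ m)⁻¹ := by
    intro m g hg
    have := hN.conj_mem _ (inl_mem_TnSub_iff.mpr hg) (θ ^ m)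
    rcases mem_TnSub_exists this with ⟨g', hg', hEq⟩
    exact ⟨g', hg', hEq.symm⟩
  let G' : Subgroup (Wr n X) :=
    { carrier := {w | ∃ g, (∀ i, g i ∈ T) ∧ ∃ m : ℤ, w = θ ^ m * inl g}
      one_mem' := ⟨1, fun i => T.one_mem, 0, by simp⟩
      mul_mem' := by
        rintro x y ⟨g, hg, a, rfl⟩ ⟨h, hh, b', rfl⟩
        rcases hconj (-b') g hg with ⟨g', hg', hEq⟩
        refine ⟨g' * h, fun i => T.mul_mem (hg' i) (hh i), a + b', ?_⟩
        rw [map_mul, hEq, zpow_add, zpow_neg]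
        group
      inv_mem' := by
        rintro x ⟨g, hg, a, rfl⟩
        rcases hconj a g⁻¹ (fun i => by simpa using T.inv_mem (hg i)) with ⟨g', hg', hEq⟩
        refine ⟨g', hg', -a, ?_⟩
        rw [hEq, map_inv]
        group }
  have hG : Gsub n T b c = G' := by
    apply le_antisymm
    · apply sup_le
      · rintro x hx
        rcases mem_TnSub_exists hx with ⟨g, hg, rfl⟩
        exact ⟨g, hg, 0, by simp⟩
      · rintro x hx
        rcases Subgroup.mem_zpowers_iff.mp hx with ⟨m, rfl⟩
        exact ⟨1, fun i => T.one_mem, m, by simp [hθ]⟩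
    · rintro x ⟨g, hg, m, rfl⟩
      exact mul_mem (Subgroup.mem_sup_right (Subgroup.mem_zpowers_iff.mpr ⟨m, rfl⟩))
        (Subgroup.mem_sup_left (inl_mem_TnSub_iff.mpr hg))
  rw [hG]; rfl

end Chars
section Key
variable {n : ℕ} {X : Type*} [Group X]

lemma inl_mulSingle_mem_TnSub {T : Subgroup X} {i : ZMod n} {x : X} (hx : x ∈ T) :
    inl (Pi.mulSingle i x) ∈ TnSub n T := by
  refine inl_mem_TnSub_iff.mpr fun j => ?_
  by_cases hj : j = i
  · subst hj; rw [Pi.mulSingle_eq_same]; exact hx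
  · rw [Pi.mulSingle_eq_of_ne hj]; exact T.one_mem

lemma TnSub_le_of_normalized [NeZero n] (T : Subgroup X)
    (hTnormal : T.Normal) (hTsimple : IsSimpleGroup ↥T)
    (hcent : Subgroup.centralizer (T : Set X) = ⊥)
    (b c : X) (N : Subgroup (Wr n X))
    (hNconj : ∀ g ∈ Gsub n T b c, ∀ x ∈ N, g * x * g⁻¹ ∈ N)
    (hN : N ≠ ⊥) : TnSub n T ≤ N := by
  set θ := thetaEl n b c with hθ
  have hTnormalW : (TnSub n T).Normal := TnSub_normal T hTnormal
  have hθG : θ ∈ Gsub n T b c := Subgroup.mem_sup_right (Subgroup.mem_zpowers _)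
  have hTnG : TnSub n T ≤ Gsub n T b c := le_sup_left
  have noncomm : ∀ x : X, x ≠ 1 → ∃ t ∈ T, t * x ≠ x * t := by
    intro x hx
    by_contra hcon
    push_neg at hcon
    have : x ∈ Subgroup.centralizer (T : Set X) :=
      Subgroup.mem_centralizer_iff.mpr fun g hg => hcon g hg
    rw [hcent, Subgroup.mem_bot] at this
    exact hx this
  obtain ⟨x, hxN, hxne⟩ : ∃ x ∈ N, x ≠ 1 := by
    by_contra hcon
    push_neg at hcon
    exact hN (le_bot_iff.mp fun x hx => Subgroup.mem_bot.mpr (hcon x hx))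
  -- Claim 1 : a nontrivial element of N ∩ Tn
  obtain ⟨y, hyN, hyTn, hyne⟩ : ∃ y, y ∈ N ∧ y ∈ TnSub n T ∧ y ≠ 1 := by
    by_cases hz : x.right = 1
    · have hxl : x = inl x.left := by
        conv_lhs => rw [← inl_left_mul_inr_right x]
        rw [hz, map_one, mul_one]
      have hgne : x.left ≠ 1 := fun h => hxne (by rw [hxl, h, map_one])
      obtain ⟨j₀, hj₀⟩ := Function.ne_iff.mp hgne
      rw [Pi.one_apply] at hj₀
      obtain ⟨t, htT, htnc⟩ := noncomm (x.left j₀) hj₀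
      refine ⟨inl (Pi.mulSingle j₀ t) * x * (inl (Pi.mulSingle j₀ t))⁻¹ * x⁻¹, ?_, ?_, ?_⟩
      · exact mul_mem (hNconj _ (hTnG (inl_mulSingle_mem_TnSub htT)) x hxN) (inv_mem hxN)
      · rw [hxl, ← map_inv, ← map_inv, ← map_mul, ← map_mul, ← map_mul]
        refine inl_mem_TnSub_iff.mpr fun j => ?_
        by_cases hj : j = j₀
        · rw [hj]
          have hval : ((Pi.mulSingle j₀ t : ZMod n → X) * x.left * (Pi.mulSingle j₀ t : ZMod n → X)⁻¹ * x.left⁻¹) j₀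
              = t * (x.left j₀ * t⁻¹ * (x.left j₀)⁻¹) := by
            simp only [Pi.mul_apply, Pi.inv_apply, Pi.mulSingle_eq_same]
            group
          rw [hval]
          exact T.mul_mem htT (hTnormal.conj_mem _ (T.inv_mem htT) _)
        · have hval : ((Pi.mulSingle j₀ t : ZMod n → X) * x.left * (Pi.mulSingle j₀ t : ZMod n → X)⁻¹ * x.left⁻¹) j = 1 := by
            simp [Pi.mulSingle_eq_of_ne hj]
          rw [hval]; exact T.one_mem
      · intro hcon
        rw [hxl, ← map_inv, ← map_inv, ← map_mul, ← map_mul, ← map_mul] at hcon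
        have h1 : ((Pi.mulSingle j₀ t : ZMod n → X) * x.left * (Pi.mulSingle j₀ t : ZMod n → X)⁻¹ * x.left⁻¹) = 1 :=
          inl_injective (by rw [hcon, map_one])
        have h2 := congrFun h1 j₀
        simp only [Pi.mul_apply, Pi.inv_apply, Pi.mulSingle_eq_same, Pi.one_apply] at h2
        have h3 : (t * x.left j₀) * (x.left j₀ * t)⁻¹ = 1 := by
          rw [mul_inv_rev, ← mul_assoc]; exact h2
        exact htnc (mul_inv_eq_one.mp h3)
    · -- x.right ≠ 1
      obtain ⟨⟨t₀, ht₀T⟩, ht₀ne'⟩ := exists_ne (1 : ↥T)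
      have ht₀ : t₀ ≠ 1 := fun h => ht₀ne' (Subtype.ext h)
      have huTn : inl (Pi.mulSingle (0 : ZMod n) t₀) ∈ TnSub n T := inl_mulSingle_mem_TnSub ht₀T
      refine ⟨inl (Pi.mulSingle (0 : ZMod n) t₀) * x * (inl (Pi.mulSingle (0 : ZMod n) t₀))⁻¹ * x⁻¹,
        ?_, ?_, ?_⟩
      · exact mul_mem (hNconj _ (hTnG huTn) x hxN) (inv_mem hxN)
      · have hdec : inl (Pi.mulSingle (0 : ZMod n) t₀) * x * (inl (Pi.mulSingle (0 : ZMod n) t₀))⁻¹ * x⁻¹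
            = inl (Pi.mulSingle (0 : ZMod n) t₀) * (x * (inl (Pi.mulSingle (0 : ZMod n) t₀))⁻¹ * x⁻¹) := by
          group
        rw [hdec]
        exact mul_mem huTn (hTnormalW.conj_mem _ (inv_mem huTn) x)
      · intro hcon
        have h1 : (inl (Pi.mulSingle (0 : ZMod n) t₀) * x) * (x * inl (Pi.mulSingle (0 : ZMod n) t₀))⁻¹ = 1 := by
          rw [mul_inv_rev, ← mul_assoc]; exact hcon
        have hcomm := mul_inv_eq_one.mp h1
        have hleft := congrArg SemidirectProduct.left hcomm
        rw [SemidirectProduct.mul_left, SemidirectProduct.mul_left] at hleft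
        have hz0 : (x.right).toAdd ≠ 0 := by
          intro h
          exact hz (by rw [← ofAdd_toAdd x.right, h]; rfl)
        have h2 := congrFun hleft (x.right).toAdd
        simp only [SemidirectProduct.left_inl, SemidirectProduct.right_inl, map_one] at h2
        rw [MulAut.one_apply] at h2
        have hsh : ((shiftHom n X x.right) (Pi.mulSingle (0 : ZMod n) t₀)) (x.right).toAdd
            = t₀ := by
          show (Pi.mulSingle (0 : ZMod n) t₀ : ZMod n → X) ((x.right).toAdd - (x.right).toAdd) = t₀
          rw [sub_self]
          exact Pi.mulSingle_eq_same _ _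
        simp only [Pi.mul_apply] at h2
        rw [hsh, Pi.mulSingle_eq_of_ne hz0, one_mul] at h2
        have := mul_left_cancel (a := x.left (x.right).toAdd)
          (show x.left (x.right).toAdd * 1 = x.left (x.right).toAdd * t₀ by rw [mul_one]; exact h2)
        exact ht₀ this.symm
  -- Claim 2 : a single-coordinate nontrivial element of N
  obtain ⟨g, hgT, rfl⟩ := mem_TnSub_exists hyTn
  have hgne : g ≠ 1 := fun h => hyne (by rw [h, map_one])
  obtain ⟨j₀, hj₀⟩ := Function.ne_iff.mp hgne
  rw [Pi.one_apply] at hj₀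
  obtain ⟨t, htT, htnc⟩ := noncomm (g j₀) hj₀
  have haT : t * g j₀ * t⁻¹ * (g j₀)⁻¹ ∈ T :=
    T.mul_mem (T.mul_mem (T.mul_mem htT (hgT j₀)) (T.inv_mem htT)) (T.inv_mem (hgT j₀))
  have hane : t * g j₀ * t⁻¹ * (g j₀)⁻¹ ≠ 1 := by
    intro h
    have h3 : (t * g j₀) * (g j₀ * t)⁻¹ = 1 := by
      rw [mul_inv_rev, ← mul_assoc]; exact h
    exact htnc (mul_inv_eq_one.mp h3)
  have hsingle : inl (Pi.mulSingle j₀ (t * g j₀ * t⁻¹ * (g j₀)⁻¹)) ∈ N := by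
    have hmem := mul_mem
      (hNconj (inl (Pi.mulSingle j₀ t)) (hTnG (inl_mulSingle_mem_TnSub (i := j₀) htT))
        (inl g) hyN) (inv_mem hyN)
    have hfun : (Pi.mulSingle j₀ t : ZMod n → X) * g * (Pi.mulSingle j₀ t : ZMod n → X)⁻¹ * g⁻¹
        = Pi.mulSingle j₀ (t * g j₀ * t⁻¹ * (g j₀)⁻¹) := by
      funext j
      by_cases hj : j = j₀
      · rw [hj]
        simp only [Pi.mul_apply, Pi.inv_apply, Pi.mulSingle_eq_same]
      · simp [Pi.mulSingle_eq_of_ne hj]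
    have hEq : (inl (Pi.mulSingle j₀ (t * g j₀ * t⁻¹ * (g j₀)⁻¹)) : Wr n X)
        = inl (Pi.mulSingle j₀ t) * inl g * (inl (Pi.mulSingle j₀ t))⁻¹ * (inl g)⁻¹ := by
      rw [← hfun]
      simp only [map_mul, map_inv]
    rw [← hEq] at hmem
    exact hmem
  -- Claim 3 : all of T in coordinate j₀
  have hQ : ∀ u ∈ T, inl (Pi.mulSingle j₀ u) ∈ N := by
    let Q : Subgroup ↥T :=
      { carrier := {u : ↥T | inl (Pi.mulSingle j₀ (u : X)) ∈ N}
        one_mem' := by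
          show inl (Pi.mulSingle j₀ ((1 : ↥T) : X)) ∈ N
          rw [OneMemClass.coe_one, Pi.mulSingle_one, map_one]
          exact N.one_mem
        mul_mem' := by
          intro u v hu hv
          show inl (Pi.mulSingle j₀ ((u * v : ↥T) : X)) ∈ N
          rw [MulMemClass.coe_mul, Pi.mulSingle_mul, map_mul]
          exact mul_mem hu hv
        inv_mem' := by
          intro u hu
          show inl (Pi.mulSingle j₀ ((u⁻¹ : ↥T) : X)) ∈ N
          rw [InvMemClass.coe_inv, Pi.mulSingle_inv, map_inv]
          exact inv_mem hu }
    have hQn : Q.Normal := by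
      constructor
      intro u hu s'
      show inl (Pi.mulSingle j₀ ((s' * u * s'⁻¹ : ↥T) : X)) ∈ N
      have hco : ((s' * u * s'⁻¹ : ↥T) : X) = (s' : X) * (u : X) * (s' : X)⁻¹ := by
        push_cast; rfl
      rw [hco, Pi.mulSingle_mul, Pi.mulSingle_mul, Pi.mulSingle_inv, map_mul, map_mul, map_inv]
      exact hNconj _ (hTnG (inl_mulSingle_mem_TnSub s'.2)) _ hu
    have hQne : Q ≠ ⊥ := by
      intro h
      have hm : (⟨t * g j₀ * t⁻¹ * (g j₀)⁻¹, haT⟩ : ↥T) ∈ Q := hsingle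
      rw [h, Subgroup.mem_bot] at hm
      exact hane (congrArg Subtype.val hm)
    rcases hTsimple.eq_bot_or_eq_top_of_normal Q hQn with h | h
    · exact absurd h hQne
    · intro u hu
      have : (⟨u, hu⟩ : ↥T) ∈ Q := by rw [h]; trivial
      exact this
  -- Claim 4 : propagation to the next coordinate
  have hprop : ∀ (i : ZMod n), (∀ u ∈ T, inl (Pi.mulSingle i u) ∈ N) →
      ∀ u ∈ T, inl (Pi.mulSingle (i+1) u) ∈ N := by
    intro i hi u hu
    have ht' : (d0 n b c (i+1))⁻¹ * u * d0 n b c (i+1) ∈ T := by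
      have := hTnormal.conj_mem u hu (d0 n b c (i+1))⁻¹
      rwa [inv_inv] at this
    have hcm := conj_mulSingle (n := n) b c i ((d0 n b c (i+1))⁻¹ * u * d0 n b c (i+1))
    have harr : d0 n b c (i+1) * ((d0 n b c (i+1))⁻¹ * u * d0 n b c (i+1)) * (d0 n b c (i+1))⁻¹
        = u := by group
    rw [harr] at hcm
    have hmem := hNconj θ hθG _ (hi _ ht')
    rw [hθ, hcm] at hmem
    exact hmem
  -- Claim 5 : all coordinates
  have hall : ∀ (j : ZMod n), ∀ u ∈ T, inl (Pi.mulSingle j u) ∈ N := by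
    have hnat : ∀ k : ℕ, ∀ u ∈ T, inl (Pi.mulSingle (j₀ + (k : ZMod n)) u) ∈ N := by
      intro k
      induction k with
      | zero => simpa using hQ
      | succ k ih =>
          have hstep : (j₀ + ((k+1 : ℕ) : ZMod n)) = (j₀ + (k : ZMod n)) + 1 := by
            push_cast; ring
          rw [hstep]
          exact hprop _ ih
    intro j
    have hj : j = j₀ + (((j - j₀).val : ℕ) : ZMod n) := by
      rw [ZMod.natCast_rightInverse (j - j₀)]; ring
    intro u hu
    rw [hj]
    exact hnat _ u hu
  -- Claim 6 : conclusion
  intro w hw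
  obtain ⟨g', hg', rfl⟩ := mem_TnSub_exists hw
  have hlist : ∀ (L : List (ZMod n)) (g2 : ZMod n → X), (∀ i, g2 i ∈ T) →
      (∀ j, j ∉ L → g2 j = 1) → inl g2 ∈ N := by
    intro L
    induction L with
    | nil =>
        intro g2 _ hsupp
        have : g2 = 1 := funext fun j => hsupp j List.not_mem_nil
        rw [this, map_one]; exact N.one_mem
    | cons a' L ih =>
        intro g2 hg2 hsupp
        have hdec : g2 = Pi.mulSingle a' (g2 a') * Function.update g2 a' 1 := by
          funext j
          by_cases hj : j = a'
          · rw [hj]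
            simp [Pi.mulSingle_eq_same, Function.update_self]
          · simp [Pi.mulSingle_eq_of_ne hj, Function.update_of_ne hj]
        rw [hdec, map_mul]
        refine mul_mem (hall a' _ (hg2 a')) (ih _ ?_ ?_)
        · intro i
          by_cases hi : i = a'
          · rw [hi, Function.update_self]; exact T.one_mem
          · rw [Function.update_of_ne hi]; exact hg2 i
        · intro j hj
          by_cases hja : j = a'
          · rw [hja, Function.update_self]
          · rw [Function.update_of_ne hja]
            exact hsupp j (by simp [List.mem_cons, hj, hja])
  exact hlist (Finset.univ.toList) g' hg'
    (fun j hj => absurd (Finset.mem_toList.mpr (Finset.mem_univ j)) hj)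

end Key
section Arith
variable {X : Type*} [Group X]

lemma closure_bc_le_zpowers {q n : ℕ} {b c : X}
    (hq3 : 3 ≤ q) (hn : n = q + 1)
    (hb : orderOf b = (q - 1) / Nat.gcd 2 (q - 1)) (hc : orderOf c = Nat.gcd 2 (q - 1))
    (hbc : b * c = c * b) (h4 : Even q ∨ 4 ∣ n) :
    Subgroup.closure ({b, c} : Set X) ≤ Subgroup.zpowers (b ^ n * c ^ (n - 1)) := by
  have hcomm : Commute b c := hbc
  have key : b ∈ Subgroup.zpowers (b ^ n * c ^ (n - 1)) ∧
      c ∈ Subgroup.zpowers (b ^ n * c ^ (n - 1)) := by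
    rcases Nat.even_or_odd q with hqe | hqo
    · -- q even
      obtain ⟨a, ha⟩ := hqe
      have ha2 : 2 ≤ a := by omega
      have hodd : (q - 1) % 2 = 1 := by omega
      have hgcd : Nat.gcd 2 (q - 1) = 1 := by
        have : ¬ (2 ∣ (q - 1)) := by omega
        exact (Nat.prime_two.coprime_iff_not_dvd).mpr this
      have hc1 : c = 1 := orderOf_eq_one_iff.mp (by rw [hc, hgcd])
      have hbord : orderOf b = q - 1 := by rw [hb, hgcd, Nat.div_one]
      obtain ⟨u, hu⟩ : ∃ u, a = u + 2 := ⟨a - 2, by omega⟩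
      have hq2 : q / 2 = a := by omega
      have hmod : (n * (q / 2)) % (q - 1) = 1 := by
        have e2 : n * (q / 2) = ((u + 3) * (2 * u + 3)) + 1 := by
          rw [hn, hq2]
          have hq' : q = 2 * u + 4 := by omega
          rw [hq', hu]
          ring
        have e1 : q - 1 = 2 * u + 3 := by omega
        rw [e2, e1, add_comm, Nat.add_mul_mod_self_right]
        exact Nat.mod_eq_of_lt (by omega)
      have hpow : b ^ (n * (q / 2)) = b := by
        have hmo := pow_mod_orderOf b (n * (q / 2))
        rw [hbord, hmod, pow_one] at hmo
        exact hmo.symm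
      constructor
      · rw [hc1, one_pow, mul_one]
        refine Subgroup.mem_zpowers_iff.mpr ⟨((q / 2 : ℕ) : ℤ), ?_⟩
        rw [zpow_natCast, ← pow_mul, hpow]
      · rw [hc1]; exact Subgroup.one_mem _
    · -- q odd
      have h4n : 4 ∣ n := by
        rcases h4 with h | h
        · exfalso; rw [Nat.even_iff] at h; rw [Nat.odd_iff] at hqo; omega
        · exact h
      have hdvd : 2 ∣ q - 1 := by rw [Nat.odd_iff] at hqo; omega
      have hgcd : Nat.gcd 2 (q - 1) = 2 := Nat.gcd_eq_left hdvd
      set m := (q - 1) / 2 with hm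
      have hbord : orderOf b = m := by rw [hb, hgcd]
      have hcord : orderOf c = 2 := by rw [hc, hgcd]
      have hq2m : q - 1 = 2 * m := by omega
      have hmodd : m % 2 = 1 := by
        rw [Nat.odd_iff] at hqo
        obtain ⟨k, hk⟩ := h4n
        omega
      have hm1 : 1 ≤ m := by omega
      have hbm : b ^ m = 1 := by rw [← hbord]; exact pow_orderOf_eq_one b
      have hc2 : c ^ 2 = 1 := by rw [← hcord]; exact pow_orderOf_eq_one c
      have hbn : b ^ n = b ^ 2 := by
        have hn' : n = m * 2 + 2 := by omega
        rw [hn', pow_add, pow_mul, hbm, one_pow, one_mul]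
      have hcm : c ^ m = c := by
        obtain ⟨k, hk⟩ : ∃ k, m = 2 * k + 1 := ⟨m / 2, by omega⟩
        rw [hk, pow_add, pow_mul, hc2, one_pow, one_mul, pow_one]
      have hcn : c ^ (n - 1) = c := by
        have hn' : n - 1 = 2 * m + 1 := by omega
        rw [hn', pow_add, pow_mul, hc2, one_pow, one_mul, pow_one]
      have hv : b ^ n * c ^ (n - 1) = b ^ 2 * c := by rw [hbn, hcn]
      have hb2m : (b ^ 2) ^ m = 1 := by
        rw [← pow_mul, mul_comm, pow_mul, hbm, one_pow]
      have hvm : (b ^ n * c ^ (n - 1)) ^ m = c := by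
        rw [hv, (hcomm.pow_left 2).mul_pow m, hb2m, one_mul, hcm]
      have hcz : c ∈ Subgroup.zpowers (b ^ n * c ^ (n - 1)) :=
        Subgroup.mem_zpowers_iff.mpr ⟨(m : ℤ), by rw [zpow_natCast, hvm]⟩
      constructor
      · have hb2mem : b ^ 2 ∈ Subgroup.zpowers (b ^ n * c ^ (n - 1)) := by
          have hmm := mul_mem (Subgroup.mem_zpowers (b ^ n * c ^ (n - 1))) (inv_mem hcz)
          have he : b ^ n * c ^ (n - 1) * c⁻¹ = b ^ 2 := by
            rw [hv, mul_inv_cancel_right]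
          rwa [he] at hmm
        have hfin : (b ^ 2) ^ ((m + 1) / 2) = b := by
          have h2 : 2 * ((m + 1) / 2) = m + 1 := by omega
          rw [← pow_mul, h2, pow_add, hbm, one_mul, pow_one]
        have := pow_mem hb2mem ((m + 1) / 2)
        rwa [hfin] at this
      · exact hcz
  refine (Subgroup.closure_le _).mpr ?_
  intro x hx
  simp only [Set.mem_insert_iff, Set.mem_singleton_iff] at hx
  rcases hx with rfl | rfl
  · exact key.1
  · exact key.2

lemma F_le_T_lemma [Finite X] {q : ℕ} (hq3 : 3 ≤ q) (T F : Subgroup X) (b c : X)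
    (hTnormal : T.Normal) (hindex : T.index ≤ 2) (hFcard : Nat.card ↥F = q)
    (hregtrans : ∀ y ∈ F, y ≠ 1 → ∀ z ∈ F, z ≠ 1 →
      ∃ x ∈ Subgroup.closure ({b, c} : Set X), x * y * x⁻¹ = z) :
    F ≤ T := by
  by_contra hnle
  obtain ⟨f, hfF, hfT⟩ := SetLike.not_le_iff_exists.mp hnle
  have hfne : f ≠ 1 := fun h => hfT (h ▸ T.one_mem)
  have htriv : ∀ g ∈ F, g ∈ T → g = 1 := by
    intro g hgF hgT
    by_contra hgne
    obtain ⟨x, hxC, hxc⟩ := hregtrans g hgF hgne f hfF hfne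
    exact hfT (hxc ▸ hTnormal.conj_mem g hgT x)
  haveI := hTnormal
  have hinj : Function.Injective (fun g : ↥F => (QuotientGroup.mk (g : X) : X ⧸ T)) := by
    intro g₁ g₂ h
    have hT : (g₁ : X)⁻¹ * g₂ ∈ T := QuotientGroup.eq.mp h
    have hFm : (g₁ : X)⁻¹ * g₂ ∈ F := F.mul_mem (F.inv_mem g₁.2) g₂.2
    have := htriv _ hFm hT
    exact Subtype.ext (inv_mul_eq_one.mp this)
  have hcard := Nat.card_le_card_of_injective _ hinj
  have hqcard : Nat.card (X ⧸ T) = T.index := rfl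
  rw [hFcard, hqcard] at hcard
  omega

lemma F_inter_closure (F : Subgroup X) (b c : X)
    (hregfree : ∀ x ∈ Subgroup.closure ({b, c} : Set X),
      (∃ y ∈ F, y ≠ 1 ∧ x * y * x⁻¹ = y) → x = 1) :
    ∀ w ∈ F, w ∈ Subgroup.closure ({b, c} : Set X) → w = 1 := by
  intro w hwF hwC
  by_contra hne
  exact hne (hregfree w hwC ⟨w, hwF, hne, mul_inv_cancel_right w w⟩)

end Arith
section FC
variable {X : Type*} [Group X]

lemma mem_sup_FC (F : Subgroup X) (b c : X)
    (hFR : ∀ x ∈ Subgroup.closure ({b, c} : Set X), ∀ y ∈ F, x * y * x⁻¹ ∈ F) :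
    ∀ u ∈ F ⊔ Subgroup.closure ({b, c} : Set X),
      ∃ f ∈ F, ∃ w ∈ Subgroup.closure ({b, c} : Set X), u = f * w := by
  set C := Subgroup.closure ({b, c} : Set X) with hC
  let FC : Subgroup X :=
    { carrier := {x | ∃ f ∈ F, ∃ w ∈ C, x = f * w}
      one_mem' := ⟨1, F.one_mem, 1, C.one_mem, by simp⟩
      mul_mem' := by
        rintro x y ⟨f, hf, w, hw, rfl⟩ ⟨f', hf', w', hw', rfl⟩
        exact ⟨f * (w * f' * w⁻¹), F.mul_mem hf (hFR w hw f' hf'), w * w', C.mul_mem hw hw',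
          by group⟩
      inv_mem' := by
        rintro x ⟨f, hf, w, hw, rfl⟩
        refine ⟨w⁻¹ * f⁻¹ * (w⁻¹)⁻¹, hFR w⁻¹ (C.inv_mem hw) f⁻¹ (F.inv_mem hf), w⁻¹,
          C.inv_mem hw, by group⟩ }
  intro u hu
  have hle : F ⊔ C ≤ FC := by
    apply sup_le
    · intro f hf; exact ⟨f, hf, 1, C.one_mem, by simp⟩
    · intro w hw; exact ⟨1, F.one_mem, w, hw, by simp⟩
  exact hle hu

end FC
/-- **Theorem 6.1 (qusi-p-g).** In the wreath-product setup, with `G = T^n⟨θ⟩` and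
`H = E:⟨θ⟩`: `H` is core-free in `G`; `T^n` is the unique minimal normal subgroup of `G`;
`T^n` is transitive on `[G:H]` (so `G` is quasiprimitive of PA type on `[G:H]`); and
`π_i(T^n ∩ H) = R ∩ T` for every `i`, i.e. `T^n ∩ H` is a subdirect product of
`(R ∩ T)^n`. -/
theorem stmt_16
    (p f q n : ℕ) (hp : p.Prime) (hf : 0 < f) (hq : q = p ^ f)
    (r s t : ℕ) (hr : r.Prime) (hrodd : Odd r)
    (hn : n = q + 1) (hn3 : 3 < n) (hnst : n = 2 ^ s * r ^ t)
    (hs : 2 ≤ s ∨ Even q)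
    {X : Type*} [Group X] [Finite X] (T : Subgroup X)
    (hTnormal : T.Normal) (hTsimple : IsSimpleGroup ↥T)
    (hTnonab : ∃ x ∈ T, ∃ y ∈ T, x * y ≠ y * x)
    (hcent : Subgroup.centralizer (T : Set X) = ⊥)
    (hindex : T.index ≤ 2)
    (F : Subgroup X) (b c : X)
    (hFcard : Nat.card ↥F = q) (hFelem : ∀ x ∈ F, x ^ p = 1)
    (hFab : ∀ x ∈ F, ∀ y ∈ F, x * y = y * x)
    (hb : orderOf b = (q - 1) / Nat.gcd 2 (q - 1))
    (hc : orderOf c = Nat.gcd 2 (q - 1))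
    (hbc : b * c = c * b)
    (hFR : ∀ x ∈ Subgroup.closure ({b, c} : Set X), ∀ y ∈ F, x * y * x⁻¹ ∈ F)
    (hregtrans : ∀ y ∈ F, y ≠ 1 → ∀ z ∈ F, z ≠ 1 →
      ∃ x ∈ Subgroup.closure ({b, c} : Set X), x * y * x⁻¹ = z)
    (hregfree : ∀ x ∈ Subgroup.closure ({b, c} : Set X),
      (∃ y ∈ F, y ≠ 1 ∧ x * y * x⁻¹ = y) → x = 1)
    (E : Subgroup (ZMod n → X))
    (hEF : E ≤ Subgroup.pi Set.univ fun _ => F)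
    (hEnorm : ∀ x ∈ Subgroup.map (SemidirectProduct.inl : (ZMod n → X) →* Wr n X) E,
      thetaEl n b c * x * (thetaEl n b c)⁻¹ ∈
        Subgroup.map (SemidirectProduct.inl : (ZMod n → X) →* Wr n X) E)
    (hEcard : Nat.card ↥E = q ^ 2)
    (hEelem : ∀ x ∈ E, x ^ p = 1)
    (hEab : ∀ x ∈ E, ∀ y ∈ E, x * y = y * x)
    (hEtrans : ∀ x ∈ E, x ≠ 1 → ∀ y ∈ E, y ≠ 1 →
      ∃ m : ℤ, (thetaEl n b c) ^ m *
        (SemidirectProduct.inl : (ZMod n → X) →* Wr n X) x * ((thetaEl n b c) ^ m)⁻¹ =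
          (SemidirectProduct.inl : (ZMod n → X) →* Wr n X) y)
    (hEproj : ∀ i : ZMod n, Subgroup.map (Pi.evalMonoidHom (fun _ => X) i) E = F)
    (hEker : Function.Injective
      fun i : ZMod n => E ⊓ MonoidHom.ker (Pi.evalMonoidHom (fun _ => X) i))
    :
    (∀ x : Wr n X, (∀ g ∈ Gsub n T b c, g * x * g⁻¹ ∈ Hsub n E b c) → x = 1) ∧
    NormalIn (TnSub n T) (Gsub n T b c) ∧
    TnSub n T ≠ ⊥ ∧
    (∀ N : Subgroup (Wr n X), NormalIn N (Gsub n T b c) → N ≠ ⊥ → TnSub n T ≤ N) ∧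
    (∀ g ∈ Gsub n T b c, ∃ h ∈ Hsub n E b c, ∃ t' ∈ TnSub n T, g = h * t') ∧
    (∀ i : ZMod n,
      Subgroup.map (Pi.evalMonoidHom (fun _ => X) i)
        (Subgroup.comap (SemidirectProduct.inl : (ZMod n → X) →* Wr n X)
          (TnSub n T ⊓ Hsub n E b c)) =
      (F ⊔ Subgroup.closure ({b, c} : Set X)) ⊓ T) := by
  haveI : NeZero n := ⟨by omega⟩
  have hq3 : 3 ≤ q := by omega
  have h4 : Even q ∨ 4 ∣ n := by
    rcases hs with h | h
    · right
      rw [hnst]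
      exact Dvd.dvd.mul_right (by
        have h22 : (2:ℕ)^2 ∣ 2^s := pow_dvd_pow 2 h
        simpa using h22) _
    · left; exact h
  have hzv := closure_bc_le_zpowers hq3 hn hb hc hbc h4
  have hvC : b ^ n * c ^ (n - 1) ∈ Subgroup.closure ({b, c} : Set X) :=
    mul_mem (pow_mem (Subgroup.subset_closure (by simp)) n)
      (pow_mem (Subgroup.subset_closure (by simp)) (n - 1))
  have hFT : F ≤ T := F_le_T_lemma hq3 T F b c hTnormal hindex hFcard hregtrans
  have hFC1 := F_inter_closure F b c hregfree
  have hterm := theta_pow_n (n := n) hbc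
  have hθnk : ∀ k : ℤ, (thetaEl n b c) ^ ((n : ℤ) * k)
      = inl (fun _ => (b ^ n * c ^ (n - 1)) ^ k) := by
    intro k
    rw [zpow_mul, zpow_natCast, hterm, ← map_zpow]
    rfl
  have hinlH : ∀ z : ZMod n → X, ((inl z : Wr n X) ∈ Hsub n E b c ↔
      ∃ e ∈ E, ∃ k : ℤ, z = e * fun _ => (b ^ n * c ^ (n - 1)) ^ k) := by
    intro z
    rw [mem_Hsub_iff hEnorm]
    constructor
    · rintro ⟨e, he, m, hEq⟩
      have hr := congrArg SemidirectProduct.rightHom hEq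
      rw [rightHom_inl, map_mul, rightHom_inl, one_mul, map_zpow, thetaEl_eq, map_mul,
        rightHom_inl, rightHom_inr, one_mul] at hr
      have hord : orderOf (ofAdd (1 : ZMod n)) = n := by
        rw [orderOf_ofAdd_eq_addOrderOf, ZMod.addOrderOf_one]
      have hdvd : ((n : ℤ)) ∣ m := by
        rw [← hord]
        exact orderOf_dvd_iff_zpow_eq_one.mpr hr.symm
      obtain ⟨k, hk⟩ := hdvd
      rw [hk, hθnk k, ← map_mul] at hEq
      exact ⟨e, he, k, inl_injective hEq⟩
    · rintro ⟨e, he, k, rfl⟩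
      exact ⟨e, he, (n : ℤ) * k, by rw [hθnk k, ← map_mul]⟩
  refine ⟨?_, ?_, ?_, ?_, ?_, ?_⟩
  · -- core-free
    intro x hx
    let K : Subgroup (Wr n X) :=
      { carrier := {w | ∀ g ∈ Gsub n T b c, g * w * g⁻¹ ∈ Hsub n E b c}
        one_mem' := by
          intro g hg
          have h1 : g * 1 * g⁻¹ = 1 := by group
          rw [h1]
          exact (Hsub n E b c).one_mem
        mul_mem' := by
          intro u w hu hw g hg
          have h1 : g * (u * w) * g⁻¹ = (g * u * g⁻¹) * (g * w * g⁻¹) := by group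
          rw [h1]
          exact mul_mem (hu g hg) (hw g hg)
        inv_mem' := by
          intro u hu g hg
          have h1 : g * u⁻¹ * g⁻¹ = (g * u * g⁻¹)⁻¹ := by group
          rw [h1]
          exact inv_mem (hu g hg) }
    by_contra hxne
    have hxK : x ∈ K := hx
    have hKne : K ≠ ⊥ := by
      intro h
      rw [h, Subgroup.mem_bot] at hxK
      exact hxne hxK
    have hKconj : ∀ g ∈ Gsub n T b c, ∀ w ∈ K, g * w * g⁻¹ ∈ K := by
      intro g hg w hw g2 hg2
      have h1 : g2 * (g * w * g⁻¹) * g2⁻¹ = (g2 * g) * w * (g2 * g)⁻¹ := by group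
      rw [h1]
      exact hw _ (mul_mem hg2 hg)
    have hTnK := TnSub_le_of_normalized T hTnormal hTsimple hcent b c K hKconj hKne
    have hmemH : ∀ u : X, u ∈ T → (inl (Pi.mulSingle (0 : ZMod n) u) : Wr n X) ∈ Hsub n E b c := by
      intro u hu
      have hK : inl (Pi.mulSingle (0 : ZMod n) u) ∈ K := hTnK (inl_mulSingle_mem_TnSub hu)
      have h1 := hK 1 (one_mem _)
      simpa using h1
    have hE0 : ∀ u : X, u ∈ T → Pi.mulSingle (0 : ZMod n) u ∈ E := by
      intro u hu
      obtain ⟨e, he, k, hEq⟩ := (hinlH _).mp (hmemH u hu)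
      have h1ne0 : (1 : ZMod n) ≠ 0 := by
        haveI : Fact (1 < n) := ⟨by omega⟩
        exact one_ne_zero
      have hv1 := congrFun hEq 1
      rw [Pi.mulSingle_eq_of_ne h1ne0] at hv1
      have he1 : e 1 ∈ F := (Subgroup.mem_pi Set.univ).mp (hEF he) 1 trivial
      have hvkF : (b ^ n * c ^ (n - 1)) ^ k ∈ F := by
        have h2 : (b ^ n * c ^ (n - 1)) ^ k = (e 1)⁻¹ :=
          eq_inv_of_mul_eq_one_right hv1.symm
        rw [h2]
        exact F.inv_mem he1
      have hvk1 : (b ^ n * c ^ (n - 1)) ^ k = 1 :=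
        hFC1 _ hvkF (Subgroup.zpow_mem _ hvC k)
      have heq2 : Pi.mulSingle (0 : ZMod n) u = e := by
        funext j
        have h3 := congrFun hEq j
        rw [Pi.mul_apply] at h3
        rw [h3, hvk1, mul_one]
      rw [heq2]
      exact he
    obtain ⟨x0, hx0T, y0, hy0T, hxy⟩ := hTnonab
    have hcomm := hEab _ (hE0 x0 hx0T) _ (hE0 y0 hy0T)
    have h4 := congrFun hcomm (0 : ZMod n)
    simp only [Pi.mul_apply, Pi.mulSingle_eq_same] at h4
    exact hxy h4
  · -- Tn normal in G
    exact ⟨le_sup_left, fun h _ x hx => (TnSub_normal T hTnormal).conj_mem x hx h⟩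
  · -- Tn nontrivial
    obtain ⟨x0, hx0T, y0, hy0T, hxy⟩ := hTnonab
    have hx0ne : x0 ≠ 1 := by rintro rfl; simp at hxy
    intro hbot
    have hmem : (inl (fun _ => x0) : Wr n X) ∈ TnSub n T :=
      inl_mem_TnSub_iff.mpr fun _ => hx0T
    rw [hbot, Subgroup.mem_bot, ← (map_one (inl : (ZMod n → X) →* Wr n X))] at hmem
    exact hx0ne (congrFun (inl_injective hmem) 0)
  · -- minimal normal
    intro N hNI hNne
    exact TnSub_le_of_normalized T hTnormal hTsimple hcent b c N hNI.2 hNne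
  · -- factorization G = H Tn
    intro g hg
    rcases (mem_Gsub_iff hTnormal).mp hg with ⟨g', hg', m, rfl⟩
    exact ⟨(thetaEl n b c) ^ m,
      Subgroup.mem_sup_right (Subgroup.mem_zpowers_iff.mpr ⟨m, rfl⟩),
      inl g', inl_mem_TnSub_iff.mpr hg', rfl⟩
  · -- projection of Tn ⊓ H
    intro i
    apply le_antisymm
    · rintro _ ⟨z, hz, rfl⟩
      obtain ⟨hzT, hzH⟩ := Subgroup.mem_comap.mp hz
      have hzT' : ∀ j, z j ∈ T := by
        rcases mem_TnSub_exists hzT with ⟨g2, hg2, hEq⟩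
        have h6 := inl_injective hEq
        rw [h6]
        exact hg2
      obtain ⟨e, he, k, hzEq⟩ := (hinlH z).mp hzH
      constructor
      · show (Pi.evalMonoidHom (fun _ => X) i) z ∈ F ⊔ Subgroup.closure ({b, c} : Set X)
        have : (Pi.evalMonoidHom (fun _ => X) i) z = e i * (b ^ n * c ^ (n - 1)) ^ k := by
          rw [hzEq]; rfl
        rw [this]
        exact mul_mem
          (Subgroup.mem_sup_left ((Subgroup.mem_pi Set.univ).mp (hEF he) i trivial))
          (Subgroup.mem_sup_right (Subgroup.zpow_mem _ hvC k))
      · exact hzT' i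
    · intro u hu
      obtain ⟨huFC, huT⟩ := hu
      obtain ⟨f0, hf0, w, hw, rfl⟩ := mem_sup_FC F b c hFR u huFC
      obtain ⟨k, hk⟩ := Subgroup.mem_zpowers_iff.mp (hzv hw)
      have hf0' : f0 ∈ F := hf0
      rw [← hEproj i] at hf0'
      obtain ⟨e, he, hei⟩ := hf0'
      have hwT : w ∈ T := by
        have h5 : f0⁻¹ * (f0 * w) = w := by group
        rw [← h5]
        exact T.mul_mem (T.inv_mem (hFT hf0)) huT
      refine ⟨e * fun _ => (b ^ n * c ^ (n - 1)) ^ k, ?_, ?_⟩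
      · refine Subgroup.mem_comap.mpr ⟨?_, ?_⟩
        · refine inl_mem_TnSub_iff.mpr fun j => ?_
          have : ((e * fun _ => (b ^ n * c ^ (n - 1)) ^ k : ZMod n → X)) j
              = e j * (b ^ n * c ^ (n - 1)) ^ k := rfl
          rw [this, hk]
          exact T.mul_mem (hFT ((Subgroup.mem_pi Set.univ).mp (hEF he) j trivial)) hwT
        · exact (hinlH _).mpr ⟨e, he, k, rfl⟩
      · have h7 : (Pi.evalMonoidHom (fun _ => X) i)
            ((e * fun _ => (b ^ n * c ^ (n - 1)) ^ k : ZMod n → X))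
            = e i * (b ^ n * c ^ (n - 1)) ^ k := rfl
        have hei' : e i = f0 := hei
        rw [h7, hei', hk]
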